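/- Let E be a real normed vector space, φ : ℝ≥0 × E → E a map satisfying the semigroup property φ(t, φ(u, x)) = φ(t + u, x) for all t, u ≥ 0 and x ∈ E, ω₀ ∈ ℝ, and g : E → ℂ. Fix x ∈ E and u ≥ 0, and assume that the map t ↦ g(φ(t, x)) is measurable and bounded on [0,∞) and that the limit A = lim_{T→∞} (1/T) ∫₀^T g(φ(t, x)) e^{−i ω₀ t} dt exists. Then the limit lim_{T→∞} (1/T) ∫₀^T g(φ(t, φ(u, x))) e^{−i ω₀ t} dt exists and equals e^{i ω₀ u} · A. -/

import Mathlib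

open Filter Topology MeasureTheory intervalIntegral

/-- The Fourier average, as a function of the initial condition, is an eigenfunction of the
Koopman operator: if the Fourier average of `t ↦ g (φ t x)` at frequency `ω₀` exists and
equals `A`, then the Fourier average of `t ↦ g (φ t (φ u x))` exists and equals
`exp (i ω₀ u) · A`. Here `φ` is a semiflow (times `t, u ≥ 0`). -/
theorem stmt7 {E : Type*} [NormedAddCommGroup E] [NormedSpace ℝ E]
    (φ : ℝ → E → E)
    (hsemi : ∀ t u : ℝ, 0 ≤ t → 0 ≤ u → ∀ x : E, φ t (φ u x) = φ (t + u) x)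
    (ω₀ : ℝ) (g : E → ℂ) (x : E) (u : ℝ) (hu : 0 ≤ u)
    (hmeas : AEStronglyMeasurable (fun t : ℝ => g (φ t x))
      (volume.restrict (Set.Ici (0:ℝ))))
    (hbdd : ∃ C : ℝ, ∀ t : ℝ, 0 ≤ t → ‖g (φ t x)‖ ≤ C)
    (A : ℂ)
    (hA : Tendsto (fun T : ℝ =>
        (1 / T) • ∫ t in (0:ℝ)..T, g (φ t x) * Complex.exp (-Complex.I * ω₀ * t))
      atTop (𝓝 A)) :
    Tendsto (fun T : ℝ =>
        (1 / T) • ∫ t in (0:ℝ)..T, g (φ t (φ u x)) * Complex.exp (-Complex.I * ω₀ * t))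
      atTop (𝓝 (Complex.exp (Complex.I * ω₀ * u) * A)) := by
  obtain ⟨C, hC⟩ := hbdd
  set f : ℝ → ℂ := fun t => g (φ t x) * Complex.exp (-Complex.I * ω₀ * t) with hf
  set F : ℝ → ℂ := fun T => ∫ t in (0:ℝ)..T, f t with hF
  -- integrability
  have hint : ∀ b : ℝ, 0 ≤ b → IntervalIntegrable f volume 0 b := by
    intro b hb
    rw [intervalIntegrable_iff, Set.uIoc_of_le hb]
    have hmeas' : AEStronglyMeasurable f (volume.restrict (Set.Ioc 0 b)) := by
      have : AEStronglyMeasurable f (volume.restrict (Set.Ici (0:ℝ))) :=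
        hmeas.mul ((Complex.continuous_exp.comp (by continuity)).aestronglyMeasurable)
      exact this.mono_measure (Measure.restrict_mono (fun y hy => hy.1.le) le_rfl)
    refine Integrable.mono' (g := fun _ => C) (integrableOn_const (by simp) (by simp)) hmeas' ?_
    filter_upwards [ae_restrict_mem measurableSet_Ioc] with t ht
    have h1 : ‖Complex.exp (-Complex.I * ω₀ * t)‖ = 1 := by
      rw [Complex.norm_exp]
      simp
    rw [hf]; simp only [norm_mul, h1, mul_one]
    exact hC t ht.1.le
  -- key identity
  have key : ∀ T : ℝ, 0 ≤ T →
      (∫ t in (0:ℝ)..T, g (φ t (φ u x)) * Complex.exp (-Complex.I * ω₀ * t))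
      = Complex.exp (Complex.I * ω₀ * u) * (F (T + u) - F u) := by
    intro T hT
    have e1 : (∫ t in (0:ℝ)..T, g (φ t (φ u x)) * Complex.exp (-Complex.I * ω₀ * t))
        = ∫ t in (0:ℝ)..T, Complex.exp (Complex.I * ω₀ * u) * f (t + u) := by
      apply intervalIntegral.integral_congr
      intro t ht
      rw [Set.uIcc_of_le hT] at ht
      simp only
      rw [hsemi t u ht.1 hu x, hf]
      simp only
      rw [Complex.ofReal_add]
      rw [show -Complex.I * ω₀ * ((t:ℂ) + u) = (-Complex.I * ω₀ * t) + (-Complex.I * ω₀ * u) by ring,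
        Complex.exp_add]
      rw [show Complex.I * ω₀ * u = -(-Complex.I * ω₀ * u) by ring, Complex.exp_neg]
      field_simp [Complex.exp_ne_zero]
    rw [e1, intervalIntegral.integral_const_mul, intervalIntegral.integral_comp_add_right,
      zero_add]
    congr 1
    rw [hF]
    rw [eq_sub_iff_add_eq, add_comm]
    exact intervalIntegral.integral_add_adjacent_intervals (hint u hu)
      ((hint u hu).symm.trans (hint (T + u) (by linarith)))
  -- limits
  have h1 : Tendsto (fun T : ℝ => (1 / (T + u)) • F (T + u)) atTop (𝓝 A) :=
    hA.comp (tendsto_atTop_add_const_right _ u tendsto_id)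
  have h2 : Tendsto (fun T : ℝ => ((T + u) / T : ℝ)) atTop (𝓝 1) := by
    have : Tendsto (fun T : ℝ => 1 + u / T) atTop (𝓝 (1 + 0)) :=
      tendsto_const_nhds.add (Tendsto.div_atTop tendsto_const_nhds tendsto_id)
    rw [add_zero] at this
    apply this.congr'
    filter_upwards [eventually_gt_atTop (0:ℝ)] with T hT
    field_simp
  have h3 : Tendsto (fun T : ℝ => (1 / T : ℝ)) atTop (𝓝 0) :=
    Tendsto.div_atTop tendsto_const_nhds tendsto_id
  have hmain : Tendsto (fun T : ℝ =>
      Complex.exp (Complex.I * ω₀ * u) *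
        ((((T + u) / T : ℝ) : ℂ) * ((1 / (T + u)) • F (T + u))
          - (((1 / T : ℝ) : ℂ)) * F u)) atTop
      (𝓝 (Complex.exp (Complex.I * ω₀ * u) * ((1:ℂ) * A - 0 * F u))) := by
    apply tendsto_const_nhds.mul
    exact (((Complex.continuous_ofReal.tendsto 1).comp h2).mul h1).sub
      (((Complex.continuous_ofReal.tendsto 0).comp h3).mul tendsto_const_nhds)
  simp only [one_mul, zero_mul, sub_zero] at hmain
  apply hmain.congr'
  filter_upwards [eventually_gt_atTop (0:ℝ)] with T hT
  rw [key T hT.le]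
  have hTu : T + u ≠ 0 := by positivity
  simp only [Complex.real_smul, Complex.ofReal_div, Complex.ofReal_one]
  have hT' : (T:ℂ) ≠ 0 := Complex.ofReal_ne_zero.2 hT.ne'
  have hTu' : ((T:ℂ) + u) ≠ 0 := by
    rw [← Complex.ofReal_add]; exact Complex.ofReal_ne_zero.2 hTu
  rw [Complex.ofReal_add]
  field_simp
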